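/- (Willems' Fundamental Lemma, rank version.) Consider the controllable discrete-time linear system x_{k+1} = A x_k + B u_k with x_k ∈ ℝ^n, u_k ∈ ℝ^m. Let (u_{[0,T−1]}, x_{[0,T−1]}) be an input-state trajectory of this system of length T, and let L ∈ ℤ_{>0}, q = T − L + 1. If the input signal u_{[0,T−1]} is persistently exciting of order n + L, then the stacked matrix [U_{L,q}; X_{1,q}] ∈ ℝ^{(Lm+n)×q}, formed from the Hankel matrix U_{L,q} of depth L of the input and the Hankel matrix X_{1,q} of depth 1 of the state, has rank Lm + n. -/

import Mathlib

open Matrix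

/-- Hankel matrix of depth `t` with `q` columns associated with the signal `z`
(taking values in `ℝ^σ`): the `((i,s), j)` entry is the `s`-th component of
`z_{i+j}`. -/
def Hankel {σ : ℕ} (z : ℕ → Fin σ → ℝ) (t q : ℕ) :
    Matrix (Fin t × Fin σ) (Fin q) ℝ :=
  Matrix.of fun is j => z (is.1.1 + j.1) is.2

/-- The signal `z_{[0,T-1]}` is persistently exciting of order `t` if its Hankel
matrix of depth `t` with `q = T - t + 1` columns has full row rank `σ t`. -/
def PersistentlyExciting {σ : ℕ} (z : ℕ → Fin σ → ℝ) (T t : ℕ) : Prop :=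
  (Hankel z t (T - t + 1)).rank = σ * t

/-- Controllability matrix `[B, AB, A²B, …, A^{n-1}B]`. -/
def ctrbMatrix {n m : ℕ} (A : Matrix (Fin n) (Fin n) ℝ)
    (B : Matrix (Fin n) (Fin m) ℝ) : Matrix (Fin n) (Fin n × Fin m) ℝ :=
  Matrix.of fun i km => (A ^ (km.1 : ℕ) * B) i km.2

section WFLAux

open Finset

/-- A matrix has full row rank iff its left kernel is trivial. -/
lemma wfl_rank_eq_card_iff_ker {R C : Type*} [Fintype R] [Fintype C] (M : Matrix R C ℝ) :
    M.rank = Fintype.card R ↔ ∀ v, v ᵥ* M = 0 → v = 0 := by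
  rw [← Matrix.rank_transpose]
  have hdef : Mᵀ.rank = Module.finrank ℝ (LinearMap.range Mᵀ.mulVecLin) := rfl
  have hrn := LinearMap.finrank_range_add_finrank_ker Mᵀ.mulVecLin
  rw [Module.finrank_fintype_fun_eq_card] at hrn
  constructor
  · intro h v hv
    have hker : LinearMap.ker Mᵀ.mulVecLin = ⊥ := by
      have h0 : Module.finrank ℝ (LinearMap.ker Mᵀ.mulVecLin) = 0 := by omega
      exact Submodule.finrank_eq_zero.mp h0
    have hv' : Mᵀ.mulVecLin v = 0 := by
      simpa [Matrix.mulVecLin_apply, Matrix.mulVec_transpose] using hv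
    exact (LinearMap.ker_eq_bot'.mp hker) v hv'
  · intro h
    have hker : LinearMap.ker Mᵀ.mulVecLin = ⊥ := by
      rw [LinearMap.ker_eq_bot']
      intro v hv
      exact h v (by simpa [Matrix.mulVecLin_apply, Matrix.mulVec_transpose] using hv)
    rw [hdef]
    rw [hker] at hrn
    simpa using hrn

lemma wfl_dot_sum {N : Type*} [Fintype N] (a : N → ℝ) (t : Finset ℕ) (f : ℕ → N → ℝ) :
    a ⬝ᵥ (∑ i ∈ t, f i) = ∑ i ∈ t, a ⬝ᵥ f i := by
  simp only [dotProduct, Finset.sum_apply, Finset.mul_sum]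
  exact Finset.sum_comm

lemma wfl_sum_dot {N : Type*} [Fintype N] (t : Finset ℕ) (f : ℕ → N → ℝ) (a : N → ℝ) :
    (∑ i ∈ t, f i) ⬝ᵥ a = ∑ i ∈ t, f i ⬝ᵥ a := by
  simp only [dotProduct, Finset.sum_apply, Finset.sum_mul]
  exact Finset.sum_comm

lemma wfl_sum_vecMul {N C : Type*} [Fintype N] [Fintype C] (t : Finset ℕ) (f : ℕ → N → ℝ)
    (M : Matrix N C ℝ) : (∑ i ∈ t, f i) ᵥ* M = ∑ i ∈ t, (f i) ᵥ* M := by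
  funext j
  simp only [Matrix.vecMul, Finset.sum_apply]
  exact wfl_sum_dot t f _

lemma wfl_vecMul_hankel {σ t q : ℕ} (z : ℕ → Fin σ → ℝ) (w : Fin t × Fin σ → ℝ)
    (wn : ℕ → Fin σ → ℝ) (hw : ∀ ps : Fin t × Fin σ, w ps = wn ps.1.1 ps.2) (j : Fin q) :
    (w ᵥ* Hankel z t q) j = ∑ p ∈ range t, wn p ⬝ᵥ z (j.1 + p) := by
  rw [show (∑ p ∈ range t, wn p ⬝ᵥ z (j.1 + p)) = ∑ p : Fin t, wn p.1 ⬝ᵥ z (j.1 + p.1) from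
    (Fin.sum_univ_eq_sum_range (fun p => wn p ⬝ᵥ z (j.1 + p)) t).symm]
  simp only [Matrix.vecMul, dotProduct, Hankel, Matrix.of_apply]
  rw [Fintype.sum_prod_type]
  refine Finset.sum_congr rfl fun p _ => Finset.sum_congr rfl fun s _ => ?_
  rw [hw (p, s), add_comm (p : ℕ) (j : ℕ)]

lemma wfl_vecMul_fromRows {R1 R2 C : Type*} [Fintype R1] [Fintype R2] [Fintype C]
    (A : Matrix R1 C ℝ) (B : Matrix R2 C ℝ) (v : R1 ⊕ R2 → ℝ) :
    v ᵥ* Matrix.fromRows A B = (v ∘ Sum.inl) ᵥ* A + (v ∘ Sum.inr) ᵥ* B := by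
  funext j
  simp [Matrix.vecMul, dotProduct, Fintype.sum_sum_type, Matrix.fromRows_apply_inl, Matrix.fromRows_apply_inr]

lemma wfl_state_expand {n m : ℕ} (A : Matrix (Fin n) (Fin n) ℝ) (B : Matrix (Fin n) (Fin m) ℝ)
    (T : ℕ) (u : ℕ → Fin m → ℝ) (x : ℕ → Fin n → ℝ)
    (htraj : ∀ k, k + 1 < T → x (k + 1) = A.mulVec (x k) + B.mulVec (u k)) :
    ∀ k j, j + k < T →
      x (j + k) = (A ^ k) *ᵥ x j + ∑ l ∈ range k, ((A ^ (k - 1 - l)) * B) *ᵥ u (j + l) := by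
  intro k
  induction k with
  | zero => intro j _; simp [Matrix.one_mulVec]
  | succ k ih =>
    intro j hj
    have h1 : x (j + (k + 1)) = A *ᵥ x (j + k) + B *ᵥ u (j + k) := by
      have := htraj (j + k) (by omega)
      simpa [← add_assoc] using this
    rw [h1, ih j (by omega)]
    rw [Matrix.mulVec_add, Finset.sum_range_succ]
    rw [Matrix.mulVec_mulVec, ← pow_succ']
    have hsum : A *ᵥ (∑ l ∈ range k, ((A ^ (k - 1 - l)) * B) *ᵥ u (j + l))
        = ∑ l ∈ range k, (A * ((A ^ (k - 1 - l)) * B)) *ᵥ u (j + l) := by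
      rw [← Matrix.mulVecLin_apply, map_sum]
      simp
    rw [hsum]
    have hterm : ∀ l ∈ range k,
        (A * (A ^ (k - 1 - l) * B)) *ᵥ u (j + l) = ((A ^ (k + 1 - 1 - l) * B)) *ᵥ u (j + l) := by
      intro l hl
      have hlk := mem_range.mp hl
      have he : k + 1 - 1 - l = k - 1 - l + 1 := by omega
      rw [he, pow_succ', Matrix.mul_assoc]
    rw [Finset.sum_congr rfl hterm]
    simp [pow_succ']
    abel

end WFLAux

/-- **Willems' fundamental lemma (rank version).**  For a controllable system
`x_{k+1} = A x_k + B u_k`, if the input of an input-state trajectory of length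
`T` is persistently exciting of order `n + L`, then the matrix obtained by
stacking the depth-`L` Hankel matrix of the input over the depth-`1` Hankel
matrix of the state has full row rank `L m + n`. -/
theorem fundamental_lemma_rank {n m : ℕ}
    (A : Matrix (Fin n) (Fin n) ℝ) (B : Matrix (Fin n) (Fin m) ℝ)
    (hctrb : (ctrbMatrix A B).rank = n)
    (T L : ℕ) (hL : 0 < L)
    (u : ℕ → Fin m → ℝ) (x : ℕ → Fin n → ℝ)
    (htraj : ∀ k, k + 1 < T → x (k + 1) = A.mulVec (x k) + B.mulVec (u k))
    (hPE : PersistentlyExciting u T (n + L)) :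
    (Matrix.fromRows (Hankel u L (T - L + 1)) (Hankel x 1 (T - L + 1))).rank
      = L * m + n := by
  classical
  rcases Nat.eq_zero_or_pos m with hm | hm
  · -- degenerate case `m = 0`: controllability forces `n = 0`.
    subst hm
    have hn0 : n = 0 := by
      have h1 := Matrix.rank_le_card_width (ctrbMatrix A B)
      rw [hctrb] at h1
      simpa using h1
    subst hn0
    have h2 := Matrix.rank_le_card_height
      (Matrix.fromRows (Hankel u L (T - L + 1)) (Hankel x 1 (T - L + 1)))
    simp at h2 ⊢
    omega
  · have hPE' : (Hankel u (n + L) (T - (n + L) + 1)).rank = m * (n + L) := hPE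
    have hwidth : m * (n + L) ≤ T - (n + L) + 1 := by
      have h1 := Matrix.rank_le_card_width (Hankel u (n + L) (T - (n + L) + 1))
      rw [hPE'] at h1
      simpa using h1
    rcases Nat.lt_or_ge T (n + L) with hT | hT
    · -- corner case: forces `n = 0`, `L = 1`, `m = 1`, `T = 0`.
      have hnL : n + L ≤ m * (n + L) := Nat.le_mul_of_pos_left (n + L) hm
      have hm' : m ≤ m * (n + L) := Nat.le_mul_of_pos_right m (by omega)
      have hq0 : T - (n + L) = 0 := by omega
      rw [hq0] at hwidth
      have hn0 : n = 0 := by omega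
      have hL1 : L = 1 := by omega
      have hm1 : m = 1 := by omega
      have hT0 : T = 0 := by omega
      subst hn0; subst hL1; subst hm1; subst hT0
      suffices hker : ∀ v, v ᵥ* (Matrix.fromRows (Hankel u 1 (0 - 1 + 1))
          (Hankel x 1 (0 - 1 + 1))) = 0 → v = 0 by
        rw [(wfl_rank_eq_card_iff_ker _).mpr hker]
        simp
      intro v hv
      rw [wfl_vecMul_fromRows] at hv
      have hxz : (v ∘ Sum.inr) ᵥ* Hankel x 1 (0 - 1 + 1) = 0 := by
        funext j
        simp [Matrix.vecMul, dotProduct, Fintype.sum_prod_type]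
      rw [hxz, add_zero] at hv
      have hkerPE := (wfl_rank_eq_card_iff_ker
        (Hankel u (0 + 1) (0 - (0 + 1) + 1))).mp (by rw [hPE']; simp)
      have hinl0 : (v ∘ Sum.inl) = 0 := hkerPE (v ∘ Sum.inl) hv
      funext r
      rcases r with a | b
      · exact congrFun hinl0 a
      · exact absurd b.2.2 (Nat.not_lt_zero _)
    · -- main case: `T ≥ n + L`.
      suffices hker : ∀ v, v ᵥ* (Matrix.fromRows (Hankel u L (T - L + 1))
          (Hankel x 1 (T - L + 1))) = 0 → v = 0 by
        rw [(wfl_rank_eq_card_iff_ker _).mpr hker]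
        simp
      intro v hv
      rw [wfl_vecMul_fromRows] at hv
      set q : ℕ := T - L + 1 with hq
      set q' : ℕ := T - (n + L) + 1 with hq'
      set η : ℕ → Fin m → ℝ :=
        fun i => if h : i < L then (fun s => v (Sum.inl (⟨i, h⟩, s))) else 0 with hηdef
      set ζ : Fin n → ℝ := fun s => v (Sum.inr (0, s)) with hζdef
      have hinl : ∀ ps : Fin L × Fin m, (v ∘ Sum.inl) ps = η ps.1.1 ps.2 := by
        intro ps
        simp only [hηdef, Function.comp_apply]
        rw [dif_pos ps.1.isLt]
      have hinr : ∀ ps : Fin 1 × Fin n, (v ∘ Sum.inr) ps = ζ ps.2 := by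
        intro ps
        have h1 : ps.1 = 0 := Subsingleton.elim _ _
        simp only [hζdef, Function.comp_apply, ← h1]
      have hbase : ∀ j, j < q → (∑ p ∈ Finset.range L, η p ⬝ᵥ u (j + p)) + ζ ⬝ᵥ x j = 0 := by
        intro j hj
        have h0 := congrFun hv ⟨j, hj⟩
        rw [Pi.add_apply, Pi.zero_apply,
          wfl_vecMul_hankel u (v ∘ Sum.inl) η hinl ⟨j, hj⟩,
          wfl_vecMul_hankel x (v ∘ Sum.inr) (fun _ => ζ) hinr ⟨j, hj⟩] at h0
        simpa using h0
      set Φ : ℕ → Fin m → ℝ := fun r => ζ ᵥ* ((A ^ r) * B) with hΦdef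
      set G : ℕ → Fin n → ℝ := fun k => ζ ᵥ* (A ^ k) with hGdef
      set wk : ℕ → ℕ → Fin m → ℝ :=
        fun k p => if p < k then Φ (k - 1 - p) else η (p - k) with hwkdef
      have hder : ∀ k, k ≤ n → ∀ j, j + n + L ≤ T →
          (∑ p ∈ Finset.range (n + L), wk k p ⬝ᵥ u (j + p)) + G k ⬝ᵥ x j = 0 := by
        intro k hk j hj
        have hb := hbase (j + k) (by omega)
        have hx := wfl_state_expand A B T u x htraj k j (by omega)
        have hzx : ζ ⬝ᵥ x (j + k)
            = G k ⬝ᵥ x j + ∑ l ∈ Finset.range k, Φ (k - 1 - l) ⬝ᵥ u (j + l) := by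
          rw [hx, dotProduct_add, Matrix.dotProduct_mulVec, wfl_dot_sum]
          congr 1
          exact Finset.sum_congr rfl fun l _ => Matrix.dotProduct_mulVec _ _ _
        have hsplit : (∑ p ∈ Finset.range (n + L), wk k p ⬝ᵥ u (j + p))
            = (∑ p ∈ Finset.range k, Φ (k - 1 - p) ⬝ᵥ u (j + p))
              + ∑ p ∈ Finset.range L, η p ⬝ᵥ u (j + k + p) := by
          rw [show n + L = k + (L + (n - k)) by omega, Finset.sum_range_add,
            Finset.sum_range_add]
          have p1 : ∀ p ∈ Finset.range k, wk k p ⬝ᵥ u (j + p) = Φ (k - 1 - p) ⬝ᵥ u (j + p) := by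
            intro p hp
            simp only [hwkdef]
            rw [if_pos (Finset.mem_range.mp hp)]
          have p2 : ∀ p ∈ Finset.range L,
              wk k (k + p) ⬝ᵥ u (j + (k + p)) = η p ⬝ᵥ u (j + k + p) := by
            intro p hp
            simp only [hwkdef]
            rw [if_neg (by omega), Nat.add_sub_cancel_left, ← add_assoc]
          have p3 : ∀ p ∈ Finset.range (n - k),
              wk k (k + (L + p)) ⬝ᵥ u (j + (k + (L + p))) = 0 := by
            intro p hp
            simp only [hwkdef]
            rw [if_neg (by omega)]
            have hη0 : η (k + (L + p) - k) = 0 := by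
              simp only [hηdef]
              rw [dif_neg (by omega)]
            rw [hη0, zero_dotProduct]
          rw [Finset.sum_congr rfl p1, Finset.sum_congr rfl p2, Finset.sum_congr rfl p3]
          simp
        rw [hzx] at hb
        rw [hsplit]
        linarith
      -- a linear dependency among `ζᵀAᵏ`, `k = 0, …, n`
      have hni : ¬ LinearIndependent ℝ (fun k : Fin (n + 1) => G k.1) := by
        intro hli
        have h1 := hli.fintype_card_le_finrank
        rw [Module.finrank_fintype_fun_eq_card] at h1
        simp at h1
      obtain ⟨g, hg0, i0, hi0⟩ := Fintype.not_linearIndependent_iff.mp hni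
      set S : Finset (Fin (n + 1)) := Finset.univ.filter (fun i => g i ≠ 0) with hS
      have hSne : S.Nonempty := ⟨i0, by simp [hS, hi0]⟩
      set Kf : Fin (n + 1) := S.max' hSne with hKf
      have hgKf : g Kf ≠ 0 := by
        rw [hKf]
        exact (Finset.mem_filter.mp (S.max'_mem hSne)).2
      have hmax : ∀ i : Fin (n + 1), Kf < i → g i = 0 := by
        intro i hi
        by_contra hne
        exact absurd (S.le_max' i (by simp [hS, hne])) (not_le.mpr hi)
      set K : ℕ := Kf.1 with hKdef
      have hKn : K ≤ n := by
        have := Kf.isLt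
        omega
      set c : ℕ → ℝ := fun k => if h : k < n + 1 then g ⟨k, h⟩ / g Kf else 0 with hcdef
      have hcK : c K = 1 := by
        simp only [hcdef]
        rw [dif_pos Kf.isLt]
        exact div_self hgKf
      have hchigh : ∀ k, K < k → c k = 0 := by
        intro k hk
        by_cases h : k < n + 1
        · simp only [hcdef]
          rw [dif_pos h, hmax ⟨k, h⟩ (by simpa [Fin.lt_def] using hk), zero_div]
        · simp only [hcdef]
          rw [dif_neg h]
      have hcG : (∑ k ∈ Finset.range (n + 1), c k • G k) = 0 := by
        have h1 : ∑ k ∈ Finset.range (n + 1), c k • G k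
            = (g Kf)⁻¹ • ∑ i : Fin (n + 1), g i • G i.1 := by
          rw [Finset.smul_sum, ← Fin.sum_univ_eq_sum_range (fun k => c k • G k) (n + 1)]
          refine Finset.sum_congr rfl fun i _ => ?_
          simp only [hcdef]
          rw [dif_pos i.isLt, smul_smul]
          congr 1
          rw [Fin.eta]
          field_simp
        rw [h1, hg0, smul_zero]
      set W : ℕ → Fin m → ℝ := fun p => ∑ k ∈ Finset.range (n + 1), c k • wk k p with hWdef
      have hWker : ∀ j, j < q' → (∑ p ∈ Finset.range (n + L), W p ⬝ᵥ u (j + p)) = 0 := by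
        intro j hj
        have hjT : j + n + L ≤ T := by omega
        have h1 : (∑ p ∈ Finset.range (n + L), W p ⬝ᵥ u (j + p))
            = ∑ k ∈ Finset.range (n + 1),
                c k * (∑ p ∈ Finset.range (n + L), wk k p ⬝ᵥ u (j + p)) := by
          simp only [hWdef]
          have e1 : ∀ p ∈ Finset.range (n + L),
              (∑ k ∈ Finset.range (n + 1), c k • wk k p) ⬝ᵥ u (j + p)
                = ∑ k ∈ Finset.range (n + 1), c k * (wk k p ⬝ᵥ u (j + p)) := by
            intro p _
            rw [wfl_sum_dot]
            refine Finset.sum_congr rfl fun k _ => ?_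
            rw [smul_dotProduct, smul_eq_mul]
          rw [Finset.sum_congr rfl e1, Finset.sum_comm]
          exact Finset.sum_congr rfl fun k _ => (Finset.mul_sum _ _ _).symm
        rw [h1]
        have e2 : ∀ k ∈ Finset.range (n + 1),
            c k * (∑ p ∈ Finset.range (n + L), wk k p ⬝ᵥ u (j + p))
              = -(c k * (G k ⬝ᵥ x j)) := by
          intro k hk
          have h3 := hder k (Nat.lt_succ_iff.mp (Finset.mem_range.mp hk)) j hjT
          have h4 : (∑ p ∈ Finset.range (n + L), wk k p ⬝ᵥ u (j + p)) = -(G k ⬝ᵥ x j) := by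
            linarith
          rw [h4]
          ring
        rw [Finset.sum_congr rfl e2]
        have e3 : ∑ k ∈ Finset.range (n + 1), -(c k * (G k ⬝ᵥ x j))
            = -((∑ k ∈ Finset.range (n + 1), c k • G k) ⬝ᵥ x j) := by
          rw [wfl_sum_dot, ← Finset.sum_neg_distrib]
          refine Finset.sum_congr rfl fun k _ => ?_
          rw [smul_dotProduct, smul_eq_mul]
        rw [e3, hcG, zero_dotProduct, neg_zero]
      have hPEker := (wfl_rank_eq_card_iff_ker (Hankel u (n + L) q')).mp
        (by rw [hPE']; simp [mul_comm])
      have hW0 : ∀ p, p < n + L → ∀ s, W p s = 0 := by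
        have h1 : (fun ps : Fin (n + L) × Fin m => W ps.1.1 ps.2) ᵥ* Hankel u (n + L) q' = 0 := by
          funext j
          rw [Pi.zero_apply, wfl_vecMul_hankel u _ W (fun ps => rfl) j]
          exact hWker j.1 j.isLt
        have h2 := hPEker _ h1
        intro p hp s
        have h3 := congrFun h2 (⟨p, hp⟩, s)
        simpa using h3
      -- extraction of `η = 0`
      have hηz : ∀ d i, L ≤ i + d → η i = 0 := by
        intro d
        induction d with
        | zero =>
          intro i hi
          simp only [hηdef]
          rw [dif_neg (by omega)]
        | succ d ih =>
          intro i hi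
          by_cases hd : L ≤ i + d
          · exact ih i hd
          · have hiL : i + d + 1 = L := by omega
            funext s
            have h0 := hW0 (K + i) (by omega) s
            simp only [hWdef, Finset.sum_apply, Pi.smul_apply, smul_eq_mul] at h0
            rw [show n + 1 = K + 1 + (n - K) by omega, Finset.sum_range_add] at h0
            have hz2 : ∀ p' ∈ Finset.range (n - K),
                c (K + 1 + p') * wk (K + 1 + p') (K + i) s = 0 := by
              intro p' _
              rw [hchigh _ (by omega), zero_mul]
            rw [Finset.sum_congr rfl hz2, Finset.sum_const_zero, add_zero,
              Finset.sum_range_succ] at h0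
            have hz1 : ∀ k ∈ Finset.range K, c k * wk k (K + i) s = 0 := by
              intro k hk
              have hkK := Finset.mem_range.mp hk
              have hwkv : wk k (K + i) = η (K + i - k) := by
                simp only [hwkdef]
                rw [if_neg (by omega)]
              have hη1 : η (K + i - k) = 0 := ih (K + i - k) (by omega)
              rw [hwkv, hη1]
              simp
            rw [Finset.sum_congr rfl hz1, Finset.sum_const_zero, zero_add, hcK, one_mul] at h0
            have hwkv : wk K (K + i) = η i := by
              simp only [hwkdef]
              rw [if_neg (by omega), Nat.add_sub_cancel_left]
            rw [hwkv] at h0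
            simpa using h0
      have hηall : ∀ i, η i = 0 := fun i => hηz L i (by omega)
      -- extraction of `ζᵀAʳB = 0` for `r < K`
      have hΦlow : ∀ r, r < K → Φ r = 0 := by
        intro r
        induction r using Nat.strong_induction_on with
        | _ r ih =>
          intro hrK
          funext s
          have h0 := hW0 (K - 1 - r) (by omega) s
          simp only [hWdef, Finset.sum_apply, Pi.smul_apply, smul_eq_mul] at h0
          rw [show n + 1 = K + 1 + (n - K) by omega, Finset.sum_range_add] at h0
          have hz2 : ∀ p' ∈ Finset.range (n - K),
              c (K + 1 + p') * wk (K + 1 + p') (K - 1 - r) s = 0 := by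
            intro p' _
            rw [hchigh _ (by omega), zero_mul]
          rw [Finset.sum_congr rfl hz2, Finset.sum_const_zero, add_zero] at h0
          rw [show K + 1 = (K - 1 - r + 1) + (r + 1) by omega, Finset.sum_range_add] at h0
          have hz1 : ∀ k ∈ Finset.range (K - 1 - r + 1), c k * wk k (K - 1 - r) s = 0 := by
            intro k hk
            have hkK := Finset.mem_range.mp hk
            have hwkv : wk k (K - 1 - r) = η (K - 1 - r - k) := by
              simp only [hwkdef]
              rw [if_neg (by omega)]
            rw [hwkv, hηall]
            simp
          rw [Finset.sum_congr rfl hz1, Finset.sum_const_zero, zero_add,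
            Finset.sum_range_succ] at h0
          have hz3 : ∀ d ∈ Finset.range r,
              c (K - 1 - r + 1 + d) * wk (K - 1 - r + 1 + d) (K - 1 - r) s = 0 := by
            intro d hd
            have hdr := Finset.mem_range.mp hd
            have hwkv : wk (K - 1 - r + 1 + d) (K - 1 - r) = Φ d := by
              simp only [hwkdef]
              rw [if_pos (by omega), show K - 1 - r + 1 + d - 1 - (K - 1 - r) = d from by omega]
            rw [hwkv, ih d (by omega) (by omega)]
            simp
          rw [Finset.sum_congr rfl hz3, Finset.sum_const_zero, zero_add,
            show K - 1 - r + 1 + r = K by omega, hcK, one_mul] at h0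
          have hwkv : wk K (K - 1 - r) = Φ r := by
            simp only [hwkdef]
            rw [if_pos (by omega), show K - 1 - (K - 1 - r) = r from by omega]
          rw [hwkv] at h0
          simpa using h0
      -- the dependency relation for `G`
      have hGK : (∑ k ∈ Finset.range K, c k • G k) + G K = 0 := by
        have h0 := hcG
        rw [show n + 1 = K + 1 + (n - K) by omega, Finset.sum_range_add] at h0
        have hz2 : ∀ p' ∈ Finset.range (n - K), c (K + 1 + p') • G (K + 1 + p') = 0 := by
          intro p' _
          rw [hchigh _ (by omega), zero_smul]
        rw [Finset.sum_congr rfl hz2, Finset.sum_const_zero, add_zero,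
          Finset.sum_range_succ, hcK, one_smul] at h0
        exact h0
      -- all Markov parameters of `ζ` vanish
      have hΦall : ∀ r, Φ r = 0 := by
        intro r
        induction r using Nat.strong_induction_on with
        | _ r ih =>
          rcases lt_or_ge r K with hrK | hKr
          · exact hΦlow r hrK
          · have hΦr : Φ r = (G K) ᵥ* ((A ^ (r - K)) * B) := by
              simp only [hΦdef, hGdef]
              rw [Matrix.vecMul_vecMul, ← Matrix.mul_assoc, ← pow_add,
                Nat.add_sub_cancel' hKr]
            rw [hΦr, eq_neg_of_add_eq_zero_right hGK, Matrix.neg_vecMul, wfl_sum_vecMul]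
            have hterm : ∀ k ∈ Finset.range K,
                (c k • G k) ᵥ* ((A ^ (r - K)) * B) = (0 : Fin m → ℝ) := by
              intro k hk
              have hkK := Finset.mem_range.mp hk
              have e : (c k • G k) ᵥ* ((A ^ (r - K)) * B) = c k • Φ (k + (r - K)) := by
                simp only [hGdef, hΦdef]
                rw [Matrix.smul_vecMul, Matrix.vecMul_vecMul, ← Matrix.mul_assoc, ← pow_add]
              rw [e, ih (k + (r - K)) (by omega)]
              simp
            rw [Finset.sum_congr rfl hterm, Finset.sum_const_zero, neg_zero]
      -- controllability forces `ζ = 0`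
      have hkerC := (wfl_rank_eq_card_iff_ker (ctrbMatrix A B)).mp (by rw [hctrb]; simp)
      have hζ0 : ζ = 0 := by
        apply hkerC
        funext ks
        have e : (ζ ᵥ* ctrbMatrix A B) ks = Φ ks.1.1 ks.2 := rfl
        rw [Pi.zero_apply, e, hΦall]
        rfl
      -- conclude
      funext r
      rcases r with a | b
      · have e : v (Sum.inl a) = η a.1.1 a.2 := hinl a
        rw [Pi.zero_apply, e, hηall]
        rfl
      · have e : v (Sum.inr b) = ζ b.2 := hinr b
        rw [Pi.zero_apply, e, hζ0]
        rfl
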